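/- Let G be an undirected irreflexive graph with edge (u,v). For vertices a, b both not in {u,v} and both lying in the same one of the three sets A := N_G(u) ∩ N_G(v), B := (N_G(u) \ N_G(v)) \ {v}, C := (N_G(v) \ N_G(u)) \ {u}, or with at least one of a, b outside A ∪ B ∪ C ∪ {u,v}, the adjacency of a and b in G ∧ uv is the same as in G. -/

import Mathlib

/-- Local complementation of `G` about `u`: edges between distinct neighbours of `u`
are complemented, all other adjacencies preserved. -/
def localComp {V : Type*} (G : SimpleGraph V) (u : V) : SimpleGraph V where
  Adj a b := (G.Adj a b ∧ ¬(G.Adj u a ∧ G.Adj u b ∧ a ≠ b)) ∨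
             (¬ G.Adj a b ∧ (G.Adj u a ∧ G.Adj u b ∧ a ≠ b))
  symm := by
    constructor
    intro a b h
    rcases h with ⟨h1, h2⟩ | ⟨h1, h2, h3, h4⟩
    · exact Or.inl ⟨h1.symm, fun ⟨x, y, z⟩ => h2 ⟨y, x, z.symm⟩⟩
    · exact Or.inr ⟨fun hc => h1 hc.symm, h3, h2, h4.symm⟩
  loopless := by
    constructor
    intro a h
    rcases h with ⟨h1, _⟩ | ⟨_, _, _, h4⟩
    · exact G.ne_of_adj h1 rfl
    · exact h4 rfl


/-- Pivot of G about the edge (u,v). -/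
def pivot {V : Type*} (G : SimpleGraph V) (u v : V) : SimpleGraph V :=
  localComp (localComp (localComp G u) v) u

set_option maxHeartbeats 1600000 in
/-- Adjacency within one of the sets A, B, C (away from u and v), or involving a
vertex outside A ∪ B ∪ C ∪ {u, v}, is unchanged by the pivot. -/
theorem pivot_adj_unchanged {V : Type*} (G : SimpleGraph V) (u v : V)
    (huv : G.Adj u v)
    (A B C : Set V)
    (hA : A = G.neighborSet u ∩ G.neighborSet v)
    (hB : B = (G.neighborSet u \ G.neighborSet v) \ {v})
    (hC : C = (G.neighborSet v \ G.neighborSet u) \ {u}) :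
    ∀ a b : V,
      ((∃ S ∈ ({A, B, C} : Set (Set V)), a ∈ S ∧ b ∈ S ∧
          a ∉ ({u, v} : Set V) ∧ b ∉ ({u, v} : Set V)) ∨
        a ∉ A ∪ B ∪ C ∪ {u, v} ∨ b ∉ A ∪ B ∪ C ∪ {u, v}) →
      ((pivot G u v).Adj a b ↔ G.Adj a b) := by
  subst hA hB hC
  intro a b h
  have hvu : G.Adj v u := huv.symm
  have huu : ¬ G.Adj u u := G.irrefl
  have hvv : ¬ G.Adj v v := G.irrefl
  have hne : u ≠ v := huv.ne
  have hne' : v ≠ u := hne.symm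
  simp only [Set.mem_insert_iff, Set.mem_singleton_iff, Set.mem_inter_iff,
    SimpleGraph.mem_neighborSet, Set.mem_diff, Set.mem_union, exists_eq_or_imp,
    exists_eq_left, not_or] at h
  by_cases hab : a = b
  · subst hab
    exact iff_of_false ((pivot G u v).irrefl) (G.irrefl)
  by_cases hau : a = u
  · subst hau
    simp only [pivot, localComp, huv, hvu, huu, hne, hne', hab, Ne, not_true, not_false_iff,
      true_and, and_true, false_and, and_false, not_not, eq_self_iff_true] at *
    tauto
  by_cases hav : a = v
  · subst hav
    simp only [pivot, localComp, huv, hvu, huu, hvv, hne, hne', hab, Ne, not_true, not_false_iff,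
      true_and, and_true, false_and, and_false, not_not, eq_self_iff_true] at *
    tauto
  by_cases hbu : b = u
  · subst hbu
    simp only [pivot, localComp, huv, hvu, huu, hne, hne', hab, hau, hav, Ne, not_true,
      not_false_iff, true_and, and_true, false_and, and_false, not_not, eq_self_iff_true] at *
    tauto
  by_cases hbv : b = v
  · subst hbv
    simp only [pivot, localComp, huv, hvu, huu, hvv, hne, hne', hab, hau, hav, Ne, not_true,
      not_false_iff, true_and, and_true, false_and, and_false, not_not, eq_self_iff_true] at *
    tauto
  · have h1 : v ≠ a := fun hx => hav hx.symm
    have h2 : v ≠ b := fun hx => hbv hx.symm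
    have h3 : u ≠ a := fun hx => hau hx.symm
    have h4 : u ≠ b := fun hx => hbu hx.symm
    simp only [pivot, localComp, huv, hvu, huu, hne, hne', hab, h1, h2, h3, h4, Ne, not_true,
      not_false_iff, true_and, and_true, false_and, and_false, not_not, eq_self_iff_true,
      or_false, false_or, not_and] at *
    by_cases gua : G.Adj u a <;> by_cases gub : G.Adj u b <;>
      by_cases gva : G.Adj v a <;> by_cases gvb : G.Adj v b <;>
      simp only [gua, gub, gva, gvb, not_true, not_false_iff, true_and, and_true, false_and,
        and_false, true_or, or_true, false_or, or_false, not_not, true_implies, false_implies,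
        not_true_eq_false, not_false_eq_true, iff_true, true_iff] at h ⊢ <;>
      tauto
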